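/- Suppose G₀ is holomorphic on ℂ ∖ (1,∞), satisfies the homogeneous three-term functional equation (1/z^2)·G₀(1/z) + 2·G₀(z+1) = G₀(z) for all z ∈ ℂ ∖ (0,∞), z ≠ 0, and G₀(z) → 0 as |z| → ∞ with the distance from z to ℝ_+ tending to infinity. Then G₀ ≡ 0. Consequently, a holomorphic function on ℂ ∖ (1,∞) satisfying the inhomogeneous equation 1/z + (1/z^2)·G(1/z) + 2·G(z+1) = G(z) together with this decay condition is unique. -/

import Mathlib

/-- The cut plane `ℂ ∖ (1, ∞)`. -/
def cutPlaneOne : Set ℂ := {z : ℂ | z.im ≠ 0 ∨ z.re ≤ 1}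

/-- The cut plane `ℂ ∖ (0, ∞)`. -/
def cutPlaneZero : Set ℂ := {z : ℂ | z.im ≠ 0 ∨ z.re ≤ 0}

/-- `G(z) → 0` as `z → ∞` in such a way that the distance from `z` to the
positive real axis `ℝ₊` tends to infinity. -/
def DecaysAwayFromPosAxis (G : ℂ → ℂ) : Prop :=
  ∀ ε : ℝ, 0 < ε → ∃ R : ℝ, ∀ z : ℂ,
    R ≤ Metric.infDist z {w : ℂ | w.im = 0 ∧ 0 ≤ w.re} → ‖G z‖ ≤ ε

open Complex Metric Filter Finset Topology

section Aux

private lemma geomHalf (m : ℕ) : ∑ k ∈ Finset.range m, ((1:ℝ)/2)^(k+1) = 1 - (1/2)^m := by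
  induction m with
  | zero => simp
  | succ n ih => rw [Finset.sum_range_succ, ih]; ring

private lemma sumBound (n : ℕ) :
    ∑ k ∈ Finset.range n, ((1:ℝ)/2)^(k+1) * (((k:ℝ)+1)^2)⁻¹ ≤ 5/8 := by
  cases n with
  | zero => simp; norm_num
  | succ m =>
    rw [Finset.sum_range_succ']
    have h1 : ∑ k ∈ Finset.range m, ((1:ℝ)/2)^(k+1+1) * (((k:ℝ)+1+1)^2)⁻¹
        ≤ ∑ k ∈ Finset.range m, (1/4) * ((1:ℝ)/2)^(k+1+1) := by
      apply Finset.sum_le_sum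
      intro k _
      have hk : (4:ℝ) ≤ ((k:ℝ)+1+1)^2 := by nlinarith [Nat.cast_nonneg (α := ℝ) k]
      have : (((k:ℝ)+1+1)^2)⁻¹ ≤ (4:ℝ)⁻¹ := inv_anti₀ (by norm_num) hk
      have hp : (0:ℝ) ≤ ((1:ℝ)/2)^(k+1+1) := by positivity
      calc ((1:ℝ)/2)^(k+1+1) * (((k:ℝ)+1+1)^2)⁻¹ ≤ ((1:ℝ)/2)^(k+1+1) * (4:ℝ)⁻¹ :=
            mul_le_mul_of_nonneg_left this hp
        _ = (1/4) * ((1:ℝ)/2)^(k+1+1) := by ring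
    have h2 : ∑ k ∈ Finset.range m, (1/4) * ((1:ℝ)/2)^(k+1+1) ≤ 1/8 := by
      have : ∑ k ∈ Finset.range m, (1/4) * ((1:ℝ)/2)^(k+1+1)
          = (1/8) * ∑ k ∈ Finset.range m, ((1:ℝ)/2)^(k+1) := by
        rw [Finset.mul_sum]; apply Finset.sum_congr rfl; intro k _; ring
      rw [this, geomHalf]
      have : (0:ℝ) ≤ (1/2:ℝ)^m := by positivity
      nlinarith
    push_cast
    have h0 : ((1:ℝ)/2)^(0+1) * ((((0:ℝ))+1)^2)⁻¹ ≤ 1/2 := by norm_num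
    nlinarith [h1, h2]

private lemma telescope (G₀ : ℂ → ℂ)
    (hfe : ∀ z : ℂ, z ∈ cutPlaneZero → z ≠ 0 →
      (z ^ 2)⁻¹ * G₀ z⁻¹ + 2 * G₀ (z + 1) = G₀ z)
    (x : ℝ) (hx : x ≤ 0) (n : ℕ) :
    G₀ (x:ℂ) = (2:ℂ)⁻¹^n * G₀ ((x:ℂ) - n) -
      ∑ k ∈ Finset.range n, (2:ℂ)⁻¹^(k+1) * (((x:ℂ) - ((k:ℂ)+1))^2)⁻¹
        * G₀ (((x:ℂ) - ((k:ℂ)+1))⁻¹) := by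
  induction n with
  | zero => simp
  | succ n ih =>
    have hzre : ((x:ℂ) - ((n:ℂ)+1)).re = x - (n+1) := by simp
    have hzim : ((x:ℂ) - ((n:ℂ)+1)).im = 0 := by simp
    have hmem : (x:ℂ) - ((n:ℂ)+1) ∈ cutPlaneZero := by
      right
      rw [hzre]
      have : (0:ℝ) ≤ (n:ℝ) := Nat.cast_nonneg n
      linarith
    have hne : (x:ℂ) - ((n:ℂ)+1) ≠ 0 := by
      intro h
      have := congrArg Complex.re h
      rw [hzre] at this
      simp at this
      have : (0:ℝ) ≤ (n:ℝ) := Nat.cast_nonneg n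
      linarith
    have heq := hfe _ hmem hne
    have hz1 : (x:ℂ) - ((n:ℂ)+1) + 1 = (x:ℂ) - n := by ring
    rw [hz1] at heq
    have h2 : G₀ ((x:ℂ) - (n:ℂ)) =
        (G₀ ((x:ℂ) - ((n:ℂ)+1)) - (((x:ℂ) - ((n:ℂ)+1))^2)⁻¹
          * G₀ (((x:ℂ) - ((n:ℂ)+1))⁻¹)) / 2 := by
      linear_combination heq / 2
    rw [Finset.sum_range_succ]
    push_cast
    rw [ih, h2]
    ring

private lemma vanish (G₀ : ℂ → ℂ)
    (hdiff : DifferentiableOn ℂ G₀ cutPlaneOne)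
    (hfe : ∀ z : ℂ, z ∈ cutPlaneZero → z ≠ 0 →
      (z ^ 2)⁻¹ * G₀ z⁻¹ + 2 * G₀ (z + 1) = G₀ z)
    (hdecay : DecaysAwayFromPosAxis G₀) :
    ∀ x ∈ Set.Icc (-1:ℝ) 0, G₀ (x:ℂ) = 0 := by
  set S : Set ℂ := Complex.ofReal '' Set.Icc (-1:ℝ) 0 with hS
  have hScut : S ⊆ cutPlaneOne := by
    rintro _ ⟨y, hy, rfl⟩
    right
    simp only [Complex.ofReal_re]
    linarith [hy.2]
  have hScomp : IsCompact S := isCompact_Icc.image Complex.continuous_ofReal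
  have hSne : S.Nonempty := ⟨0, ⟨0, by norm_num, by simp⟩⟩
  have hcont : ContinuousOn (fun z => ‖G₀ z‖) S := (hdiff.continuousOn.mono hScut).norm
  obtain ⟨z₀, hz₀S, hmaxOn⟩ := hScomp.exists_isMaxOn hSne hcont
  set M := ‖G₀ z₀‖ with hMdef
  have hM0 : 0 ≤ M := norm_nonneg _
  have hmax : ∀ z ∈ S, ‖G₀ z‖ ≤ M := fun z hz => hmaxOn hz
  have hest : ∀ x ∈ Set.Icc (-1:ℝ) 0, ∀ n : ℕ,
      ‖G₀ (x:ℂ)‖ ≤ (1/2:ℝ)^n * ‖G₀ ((x:ℂ) - n)‖ + (5/8) * M := by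
    intro x hx n
    rw [telescope G₀ hfe x hx.2 n]
    have h2n : ‖(2:ℂ)⁻¹^n‖ = (1/2:ℝ)^n := by
      rw [norm_pow, norm_inv]; norm_num
    calc ‖(2:ℂ)⁻¹^n * G₀ ((x:ℂ) - n) -
          ∑ k ∈ Finset.range n, (2:ℂ)⁻¹^(k+1) * (((x:ℂ) - ((k:ℂ)+1))^2)⁻¹
            * G₀ (((x:ℂ) - ((k:ℂ)+1))⁻¹)‖
        ≤ ‖(2:ℂ)⁻¹^n * G₀ ((x:ℂ) - n)‖ +
          ‖∑ k ∈ Finset.range n, (2:ℂ)⁻¹^(k+1) * (((x:ℂ) - ((k:ℂ)+1))^2)⁻¹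
            * G₀ (((x:ℂ) - ((k:ℂ)+1))⁻¹)‖ := norm_sub_le _ _
      _ ≤ (1/2:ℝ)^n * ‖G₀ ((x:ℂ) - n)‖ +
          ∑ k ∈ Finset.range n, (1/2:ℝ)^(k+1) * (((k:ℝ)+1)^2)⁻¹ * M := by
          refine add_le_add ?_ ?_
          · rw [norm_mul, h2n]
          · refine (norm_sum_le _ _).trans (Finset.sum_le_sum ?_)
            intro k _
            have hcast : (x:ℂ) - ((k:ℂ)+1) = ((x - (k+1) : ℝ) : ℂ) := by push_cast; ring
            have hle : (k:ℝ) + 1 ≤ (k:ℝ) + 1 - x := by linarith [hx.2]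
            have hpos : (0:ℝ) < (k:ℝ) + 1 := by positivity
            have hnorm : ‖(x:ℂ) - ((k:ℂ)+1)‖ = (k:ℝ) + 1 - x := by
              rw [hcast, Complex.norm_real, Real.norm_eq_abs, abs_of_nonpos (by linarith)]
              ring
            have hb : ‖(((x:ℂ) - ((k:ℂ)+1))^2)⁻¹‖ ≤ (((k:ℝ)+1)^2)⁻¹ := by
              rw [norm_inv, norm_pow, hnorm]
              exact inv_anti₀ (by positivity) (by nlinarith)
            have hmem : (((x:ℂ) - ((k:ℂ)+1))⁻¹) ∈ S := by
              rw [hcast, ← Complex.ofReal_inv]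
              refine ⟨(x - ((k:ℝ)+1))⁻¹, ?_, rfl⟩
              have ha : x - ((k:ℝ)+1) ≤ -1 := by linarith [hx.2]
              have ha0 : x - ((k:ℝ)+1) < 0 := by linarith
              constructor
              · have h1 : (1:ℝ) ≤ -(x - ((k:ℝ)+1)) := by linarith
                have h2 : (-(x - ((k:ℝ)+1)))⁻¹ ≤ 1 := inv_le_one_of_one_le₀ h1
                have h3 : (x - ((k:ℝ)+1))⁻¹ = -((-(x - ((k:ℝ)+1)))⁻¹) := by
                  rw [inv_neg, neg_neg]
                rw [h3]; linarith
              · exact inv_nonpos.mpr ha0.le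
            have hGb : ‖G₀ (((x:ℂ) - ((k:ℂ)+1))⁻¹)‖ ≤ M := hmax _ hmem
            have h2k : ‖(2:ℂ)⁻¹^(k+1)‖ = (1/2:ℝ)^(k+1) := by
              rw [norm_pow, norm_inv]; norm_num
            rw [norm_mul, norm_mul, h2k]
            have hp : (0:ℝ) ≤ (1/2:ℝ)^(k+1) := by positivity
            exact mul_le_mul (mul_le_mul_of_nonneg_left hb hp) hGb (norm_nonneg _)
              (by positivity)
      _ ≤ (1/2:ℝ)^n * ‖G₀ ((x:ℂ) - n)‖ + (5/8) * M := by
          have hs : ∑ k ∈ Finset.range n, (1/2:ℝ)^(k+1) * (((k:ℝ)+1)^2)⁻¹ * M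
              ≤ (5/8) * M := by
            rw [← Finset.sum_mul]
            exact mul_le_mul_of_nonneg_right (sumBound n) hM0
          exact add_le_add le_rfl hs
  obtain ⟨R, hR⟩ := hdecay 1 one_pos
  obtain ⟨y₀, hy₀, rfl⟩ := hz₀S
  have hfar : ∀ n : ℕ, R ≤ (n:ℝ) → ‖G₀ ((y₀:ℂ) - n)‖ ≤ 1 := by
    intro n hn
    apply hR
    refine hn.trans ?_
    rw [Metric.infDist_eq_iInf]
    have hne : Nonempty ({w : ℂ | w.im = 0 ∧ 0 ≤ w.re} : Set ℂ) := ⟨⟨0, by simp⟩⟩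
    apply le_ciInf
    rintro ⟨w, hw0, hw1⟩
    rw [dist_eq_norm]
    have h1 : |(((y₀:ℂ) - n) - w).re| ≤ ‖((y₀:ℂ) - n) - w‖ := Complex.abs_re_le_norm _
    have h2 : (((y₀:ℂ) - n) - w).re = y₀ - n - w.re := by simp
    rw [h2] at h1
    have : (n:ℝ) ≤ |y₀ - n - w.re| := by
      rw [abs_of_nonpos (by linarith [hy₀.2])]
      linarith [hy₀.2]
    linarith
  have hMn : ∀ n : ℕ, R ≤ (n:ℝ) → (3/8) * M ≤ (1/2:ℝ)^n := by
    intro n hn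
    have hx := hest y₀ hy₀ n
    have h1 := hfar n hn
    have hp : (0:ℝ) ≤ (1/2:ℝ)^n := by positivity
    have : M ≤ (1/2:ℝ)^n * 1 + (5/8) * M := by
      refine hx.trans ?_
      gcongr
    linarith
  have hMle : (3/8) * M ≤ 0 := by
    have htend : Tendsto (fun n : ℕ => (1/2:ℝ)^n) atTop (nhds 0) :=
      tendsto_pow_atTop_nhds_zero_of_lt_one (by norm_num) (by norm_num)
    refine ge_of_tendsto htend ?_
    filter_upwards [eventually_ge_atTop ⌈R⌉₊] with n hn
    exact hMn n (le_trans (Nat.le_ceil R) (by exact_mod_cast hn))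
  have hMzero : M = 0 := le_antisymm (by linarith) hM0
  intro x hx
  have : ‖G₀ (x:ℂ)‖ ≤ M := hmax _ ⟨x, hx, rfl⟩
  rw [hMzero] at this
  exact norm_le_zero_iff.mp this

private lemma slit_preconn : IsPreconnected Complex.slitPlane := by
  apply isPreconnected_of_forall (1:ℂ)
  intro y hy
  exact ⟨segment ℝ 1 y, Complex.starConvex_one_slitPlane.segment_subset hy,
    left_mem_segment ℝ 1 y, right_mem_segment ℝ 1 y, (convex_segment 1 y).isPreconnected⟩

private lemma U_eq : {z : ℂ | z.im ≠ 0 ∨ z.re < 1}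
    = (fun z : ℂ => 1 - z) ⁻¹' Complex.slitPlane := by
  ext z
  simp only [Set.mem_setOf_eq, Set.mem_preimage, Complex.mem_slitPlane_iff, Complex.sub_re,
    Complex.sub_im, Complex.one_re, Complex.one_im]
  constructor
  · rintro (h | h)
    · right; simpa using h
    · left; linarith
  · rintro (h | h)
    · right; linarith
    · left; simpa using h

private lemma U_open : IsOpen {z : ℂ | z.im ≠ 0 ∨ z.re < 1} := by
  rw [U_eq]
  exact Complex.isOpen_slitPlane.preimage (by continuity)

private lemma U_preconn : IsPreconnected {z : ℂ | z.im ≠ 0 ∨ z.re < 1} := by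
  have hinv : Function.LeftInverse (fun z : ℂ => 1 - z) (fun z : ℂ => 1 - z) :=
    fun z => by simp
  have himg : (fun z : ℂ => 1 - z) '' Complex.slitPlane
      = (fun z : ℂ => 1 - z) ⁻¹' Complex.slitPlane :=
    congrFun (Set.image_eq_preimage_of_inverse hinv hinv) Complex.slitPlane
  rw [U_eq, ← himg]
  exact slit_preconn.image _ (continuous_const.sub continuous_id).continuousOn

private lemma homog_vanish (G₀ : ℂ → ℂ)
    (hdiff : DifferentiableOn ℂ G₀ cutPlaneOne)
    (hfe : ∀ z : ℂ, z ∈ cutPlaneZero → z ≠ 0 →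
      (z ^ 2)⁻¹ * G₀ z⁻¹ + 2 * G₀ (z + 1) = G₀ z)
    (hdecay : DecaysAwayFromPosAxis G₀) :
    ∀ z ∈ cutPlaneOne, G₀ z = 0 := by
  set U : Set ℂ := {z : ℂ | z.im ≠ 0 ∨ z.re < 1} with hU
  have hUsub : U ⊆ cutPlaneOne := by
    rintro z (h | h)
    · exact Or.inl h
    · exact Or.inr h.le
  have han : AnalyticOnNhd ℂ G₀ U := (hdiff.mono hUsub).analyticOnNhd U_open
  have h0U : (0:ℂ) ∈ U := Or.inr (by norm_num)
  -- the sequence -1/(n+1) witnesses frequent vanishing near 0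
  have hseq : Tendsto (fun n : ℕ => ((-(1/((n:ℝ)+1)) : ℝ) : ℂ)) atTop (𝓝[≠] (0:ℂ)) := by
    rw [tendsto_nhdsWithin_iff]
    constructor
    · have t1 : Tendsto (fun n : ℕ => -(1/((n:ℝ)+1))) atTop (𝓝 0) := by
        simpa using (tendsto_one_div_add_atTop_nhds_zero_nat (𝕜 := ℝ)).neg
      have t2 := (Complex.continuous_ofReal.tendsto (0:ℝ)).comp t1
      simpa [Function.comp_def] using t2
    · filter_upwards with n
      simp only [Set.mem_compl_iff, Set.mem_singleton_iff]
      intro h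
      have h' : -(1/((n:ℝ)+1)) = 0 := by exact_mod_cast h
      have : (0:ℝ) < 1/((n:ℝ)+1) := by positivity
      linarith
  have hfreq : ∃ᶠ z in 𝓝[≠] (0:ℂ), G₀ z = 0 := by
    apply hseq.frequently
    apply Filter.Eventually.frequently
    filter_upwards with n
    apply vanish G₀ hdiff hfe hdecay
    constructor
    · have h1 : 1/((n:ℝ)+1) ≤ 1 := by
        rw [div_le_one (by positivity)]
        linarith [Nat.cast_nonneg (α := ℝ) n]
      linarith
    · have : (0:ℝ) < 1/((n:ℝ)+1) := by positivity
      linarith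
  have hzeroU : Set.EqOn G₀ 0 U :=
    han.eqOn_zero_of_preconnected_of_frequently_eq_zero U_preconn h0U hfreq
  intro z hz
  by_cases him : z.im ≠ 0
  · exact hzeroU (Or.inl him)
  · push_neg at him
    have hre : z.re ≤ 1 := by
      rcases hz with h | h
      · exact absurd him h
      · exact h
    rcases lt_or_eq_of_le hre with h | h
    · exact hzeroU (Or.inr h)
    · -- z = 1, use continuity from within
      have hz1 : z = 1 := Complex.ext (by simpa using h) (by simpa using him)
      subst hz1
      have hc : ContinuousWithinAt G₀ cutPlaneOne 1 :=
        hdiff.continuousOn 1 (Or.inr le_rfl)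
      have hvt : Tendsto (fun n : ℕ => ((1 - 1/((n:ℝ)+1) : ℝ) : ℂ)) atTop
          (𝓝[cutPlaneOne] (1:ℂ)) := by
        rw [tendsto_nhdsWithin_iff]
        constructor
        · have t1 : Tendsto (fun n : ℕ => (1 - 1/((n:ℝ)+1))) atTop (𝓝 1) := by
            have := tendsto_one_div_add_atTop_nhds_zero_nat.const_sub (1:ℝ)
            simpa using this
          have t2 := (Complex.continuous_ofReal.tendsto (1:ℝ)).comp t1
          simpa [Function.comp_def] using t2
        · filter_upwards with n
          right
          simp only [Complex.ofReal_re]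
          have : (0:ℝ) < 1/((n:ℝ)+1) := by positivity
          linarith
      have hcomp : Tendsto (fun n : ℕ => G₀ ((1 - 1/((n:ℝ)+1) : ℝ) : ℂ)) atTop
          (𝓝 (G₀ 1)) := (hc.tendsto).comp hvt
      have hzs : ∀ n : ℕ, G₀ ((1 - 1/((n:ℝ)+1) : ℝ) : ℂ) = 0 := by
        intro n
        apply hzeroU
        right
        simp only [Complex.ofReal_re]
        have : (0:ℝ) < 1/((n:ℝ)+1) := by positivity
        linarith
      have hconst : Tendsto (fun _ : ℕ => (0:ℂ)) atTop (𝓝 (G₀ 1)) :=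
        hcomp.congr hzs
      have := tendsto_nhds_unique hconst tendsto_const_nhds
      simpa using this

end Aux

/-- A function holomorphic on `ℂ ∖ (1,∞)`, decaying away from `ℝ₊`, and
satisfying the homogeneous three-term functional equation
`(1/z²)·G₀(1/z) + 2·G₀(z+1) = G₀(z)` vanishes identically; consequently a
holomorphic solution of the inhomogeneous equation
`1/z + (1/z²)·G(1/z) + 2·G(z+1) = G(z)` with this decay is unique. -/
theorem dyadic_period_function_unique :
    (∀ G₀ : ℂ → ℂ, DifferentiableOn ℂ G₀ cutPlaneOne →
      (∀ z : ℂ, z ∈ cutPlaneZero → z ≠ 0 →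
        (z ^ 2)⁻¹ * G₀ z⁻¹ + 2 * G₀ (z + 1) = G₀ z) →
      DecaysAwayFromPosAxis G₀ →
      ∀ z ∈ cutPlaneOne, G₀ z = 0) ∧
    (∀ G₁ G₂ : ℂ → ℂ, DifferentiableOn ℂ G₁ cutPlaneOne →
      DifferentiableOn ℂ G₂ cutPlaneOne →
      (∀ z : ℂ, z ∈ cutPlaneZero → z ≠ 0 →
        z⁻¹ + (z ^ 2)⁻¹ * G₁ z⁻¹ + 2 * G₁ (z + 1) = G₁ z) →
      (∀ z : ℂ, z ∈ cutPlaneZero → z ≠ 0 →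
        z⁻¹ + (z ^ 2)⁻¹ * G₂ z⁻¹ + 2 * G₂ (z + 1) = G₂ z) →
      DecaysAwayFromPosAxis G₁ → DecaysAwayFromPosAxis G₂ →
      ∀ z ∈ cutPlaneOne, G₁ z = G₂ z) := by
  constructor
  · exact homog_vanish
  · intro G₁ G₂ hd1 hd2 hfe1 hfe2 hdec1 hdec2 z hz
    have hd : DifferentiableOn ℂ (fun w => G₁ w - G₂ w) cutPlaneOne := hd1.sub hd2
    have hfe : ∀ w : ℂ, w ∈ cutPlaneZero → w ≠ 0 →
        (w ^ 2)⁻¹ * (G₁ w⁻¹ - G₂ w⁻¹) + 2 * (G₁ (w + 1) - G₂ (w + 1))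
          = G₁ w - G₂ w := by
      intro w hw hw0
      linear_combination (hfe1 w hw hw0) - (hfe2 w hw hw0)
    have hdec : DecaysAwayFromPosAxis (fun w => G₁ w - G₂ w) := by
      intro ε hε
      obtain ⟨R₁, hR₁⟩ := hdec1 (ε/2) (by linarith)
      obtain ⟨R₂, hR₂⟩ := hdec2 (ε/2) (by linarith)
      refine ⟨max R₁ R₂, fun w hw => ?_⟩
      have h1 := hR₁ w (le_trans (le_max_left _ _) hw)
      have h2 := hR₂ w (le_trans (le_max_right _ _) hw)
      calc ‖G₁ w - G₂ w‖ ≤ ‖G₁ w‖ + ‖G₂ w‖ := norm_sub_le _ _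
        _ ≤ ε/2 + ε/2 := add_le_add h1 h2
        _ = ε := by ring
    have := homog_vanish (fun w => G₁ w - G₂ w) hd hfe hdec z hz
    exact sub_eq_zero.mp this
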